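/- Let à ∈ ℂ^{n×n} be a Hermitian positive definite matrix and let y ∈ ℂⁿ be nonzero. Then ρ̃(y) ≤ ρ̃(Ãy), where ρ̃ denotes the Rayleigh quotient of Ã, and equality holds if and only if y is an eigenvector of Ã. -/

import Mathlib

/-- The Rayleigh quotient `ρ(v) = (vᴴAv)/(vᴴv)` of the Hermitian matrix `A`. -/
noncomputable def rayleigh {n : ℕ} (A : Matrix (Fin n) (Fin n) ℂ)
    (v : EuclideanSpace ℂ (Fin n)) : ℝ :=
  ((inner ℂ v (Matrix.toEuclideanLin A v) : ℂ)).re / ‖v‖ ^ 2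

/-- The `i`-th largest Ritz value (1-indexed, `i ∈ {1, …, dim S}`) of the Hermitian
matrix `A` in the subspace `S`, characterized via the Courant–Fischer max-min
principle applied inside `S` (equivalently, the `i`-th largest eigenvalue of
`SᴴAS` for any orthonormal basis matrix `S`). -/
noncomputable def ritzValue {n : ℕ} (A : Matrix (Fin n) (Fin n) ℂ)
    (S : Submodule ℂ (EuclideanSpace ℂ (Fin n))) (i : ℕ) : ℝ :=
  sSup {r : ℝ | ∃ T : Submodule ℂ (EuclideanSpace ℂ (Fin n)), T ≤ S ∧
    Module.finrank ℂ T = i ∧ ∀ v ∈ T, v ≠ 0 → r ≤ rayleigh A v}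

/-- `f(A) = ∑ j, f(λ_j) x_j x_jᴴ` as a linear operator, for eigenvalues `lam`
and orthonormal eigenvectors `x` of `A`. -/
noncomputable def matFun {n : ℕ} (lam : Fin n → ℝ)
    (x : Fin n → EuclideanSpace ℂ (Fin n)) (f : ℝ → ℝ) :
    EuclideanSpace ℂ (Fin n) →ₗ[ℂ] EuclideanSpace ℂ (Fin n) :=
  ∑ j : Fin n, (f (lam j) : ℂ) • ((innerSL ℂ (x j)).toLinearMap.smulRight (x j))

/-- `y` is a Ritz vector of `A` in `S` associated with the Ritz value `η`:
`y ∈ S`, `y ≠ 0`, `ρ(y) = η` and `Ay − ηy ⊥ S`. -/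
def IsRitzVector {n : ℕ} (A : Matrix (Fin n) (Fin n) ℂ)
    (S : Submodule ℂ (EuclideanSpace ℂ (Fin n))) (η : ℝ)
    (y : EuclideanSpace ℂ (Fin n)) : Prop :=
  y ∈ S ∧ y ≠ 0 ∧ rayleigh A y = η ∧
    ∀ v ∈ S, (inner ℂ v (Matrix.toEuclideanLin A y - (η : ℂ) • y) : ℂ) = 0



open scoped ComplexOrder

section aux
variable {n : ℕ}

lemma toEuclideanLin_mul (M N : Matrix (Fin n) (Fin n) ℂ) (v : EuclideanSpace ℂ (Fin n)) :
    Matrix.toEuclideanLin (M * N) v = Matrix.toEuclideanLin M (Matrix.toEuclideanLin N v) := by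
  simp [Matrix.toEuclideanLin_apply, Matrix.mulVec_mulVec]

lemma pos_re_inner (A : Matrix (Fin n) (Fin n) ℂ) (hA : A.PosDef)
    (x : EuclideanSpace ℂ (Fin n)) (hx : x ≠ 0) :
    0 < (inner ℂ x (Matrix.toEuclideanLin A x) : ℂ).re ∧
      (inner ℂ x (Matrix.toEuclideanLin A x) : ℂ).im = 0 := by
  have hx' : (WithLp.equiv 2 (Fin n → ℂ)) x ≠ 0 := by
    simpa using hx
  have h := hA.dotProduct_mulVec_pos hx'
  rw [Complex.lt_def] at h
  have : (inner ℂ x (Matrix.toEuclideanLin A x) : ℂ)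
      = dotProduct (star ((WithLp.equiv 2 (Fin n → ℂ)) x))
        (A.mulVec ((WithLp.equiv 2 (Fin n → ℂ)) x)) := by
    rw [EuclideanSpace.inner_eq_star_dotProduct, dotProduct_comm]; rfl
  rw [this]
  exact ⟨by simpa using h.1, by simpa using h.2.symm⟩

end aux

section aux2
variable {n : ℕ}
open scoped MatrixOrder

lemma inner_sqrt (A : Matrix (Fin n) (Fin n) ℂ) (hA : A.PosDef)
    (u v : EuclideanSpace ℂ (Fin n)) :
    (inner ℂ u (Matrix.toEuclideanLin A v) : ℂ) =
      inner ℂ (Matrix.toEuclideanLin (CFC.sqrt A) u)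
        (Matrix.toEuclideanLin (CFC.sqrt A) v) := by
  have hB : (CFC.sqrt A).IsHermitian := (Matrix.nonneg_iff_posSemidef.mp (CFC.sqrt_nonneg A)).1
  have hBs := Matrix.isHermitian_iff_isSymmetric.1 hB
  have : Matrix.toEuclideanLin A v
      = Matrix.toEuclideanLin (CFC.sqrt A)
        (Matrix.toEuclideanLin (CFC.sqrt A) v) := by
    rw [← toEuclideanLin_mul, CFC.sqrt_mul_sqrt_self A hA.posSemidef.nonneg]
  rw [this, ← hBs]

lemma rayleigh_smul (A : Matrix (Fin n) (Fin n) ℂ) (c : ℂ) (hc : c ≠ 0)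
    (v : EuclideanSpace ℂ (Fin n)) :
    rayleigh A (c • v) = rayleigh A v := by
  unfold rayleigh
  rw [map_smul, inner_smul_left, inner_smul_right, norm_smul]
  have h1 : (starRingEnd ℂ) c * (c * (inner ℂ v (Matrix.toEuclideanLin A v) : ℂ))
      = ((‖c‖ : ℂ)^2) * inner ℂ v (Matrix.toEuclideanLin A v) := by
    rw [← mul_assoc, Complex.conj_mul']
  rw [h1]
  have hc2 : (‖c‖^2 : ℝ) ≠ 0 := pow_ne_zero 2 (norm_ne_zero_iff.2 hc)
  rw [← Complex.ofReal_pow, Complex.re_ofReal_mul, mul_pow,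
    mul_div_mul_left _ _ hc2]
end aux2


/-- For a Hermitian positive definite matrix `Ã` and a nonzero
vector `y`, the Rayleigh quotient satisfies `ρ̃(y) ≤ ρ̃(Ãy)`, with equality if and
only if `y` is an eigenvector of `Ã`. -/
theorem stmt19 {n : ℕ}
    (A : Matrix (Fin n) (Fin n) ℂ) (hA : A.PosDef)
    (y : EuclideanSpace ℂ (Fin n)) (hy : y ≠ 0) :
    rayleigh A y ≤ rayleigh A (Matrix.toEuclideanLin A y) ∧
    (rayleigh A y = rayleigh A (Matrix.toEuclideanLin A y) ↔
      ∃ μ : ℂ, Matrix.toEuclideanLin A y = μ • y) := by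
  set T := Matrix.toEuclideanLin A with hT
  set B := Matrix.toEuclideanLin (open scoped MatrixOrder in CFC.sqrt A) with hB
  have hsym := Matrix.isHermitian_iff_isSymmetric.1 hA.1
  set w := T y with hw
  obtain ⟨ha, him⟩ := pos_re_inner A hA y hy
  set a := (inner ℂ y w : ℂ).re with haa
  have hiw : (inner ℂ y w : ℂ) = (a : ℂ) := Complex.ext rfl (by simpa using him)
  have hwne : w ≠ 0 := by
    intro h
    rw [h, inner_zero_right] at hiw
    exact ha.ne' (Complex.ofReal_eq_zero.1 hiw.symm)
  obtain ⟨hc, _⟩ := pos_re_inner A hA w hwne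
  set c := (inner ℂ w (T w) : ℂ).re with hcc
  have hp : (0:ℝ) < ‖y‖ ^ 2 := pow_pos (norm_pos_iff.2 hy) 2
  have hbpos : (0:ℝ) < ‖w‖ ^ 2 := pow_pos (norm_pos_iff.2 hwne) 2
  -- inequality 1 : a ≤ ‖y‖ * ‖w‖
  have hineq1 : a ≤ ‖y‖ * ‖w‖ := by
    have : ‖(inner ℂ y w : ℂ)‖ ≤ ‖y‖ * ‖w‖ := norm_inner_le_norm y w
    rw [hiw] at this
    calc a ≤ |a| := le_abs_self a
    _ = ‖(a : ℂ)‖ := ((Complex.norm_real a).trans (Real.norm_eq_abs a)).symm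
    _ ≤ ‖y‖ * ‖w‖ := this
  -- norms with B
  have hBy : ‖B y‖ ^ 2 = a := by
    have h0 : (inner ℂ (B y) (B y) : ℂ) = inner ℂ y (T y) := (inner_sqrt A hA y y).symm
    rw [inner_self_eq_norm_sq_to_K (𝕜 := ℂ)] at h0
    rw [haa, hw, ← h0]
    norm_cast
  have hBw : ‖B w‖ ^ 2 = c := by
    have h0 : (inner ℂ (B w) (B w) : ℂ) = inner ℂ w (T w) := (inner_sqrt A hA w w).symm
    rw [inner_self_eq_norm_sq_to_K (𝕜 := ℂ)] at h0
    rw [hcc, ← h0]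
    norm_cast
  -- inequality 2 : ‖w‖^2 ≤ ‖B y‖ * ‖B w‖
  have hineq2 : ‖w‖ ^ 2 ≤ ‖B y‖ * ‖B w‖ := by
    have h1 : (inner ℂ w w : ℂ) = inner ℂ (B y) (B w) := by
      have h0 : (inner ℂ y (T w) : ℂ) = inner ℂ (B y) (B w) := inner_sqrt A hA y w
      rw [← h0, hw]
      exact hsym y (T y)
    have h2 : ‖w‖ ^ 2 ≤ ‖(inner ℂ (B y) (B w) : ℂ)‖ := by
      rw [← h1, inner_self_eq_norm_sq_to_K (𝕜 := ℂ), norm_pow, RCLike.norm_ofReal,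
        abs_norm]
    exact h2.trans (norm_inner_le_norm _ _)
  have hsq : (‖w‖ ^ 2) ^ 2 ≤ a * c := by
    calc (‖w‖ ^ 2) ^ 2 ≤ (‖B y‖ * ‖B w‖) ^ 2 := by
          apply pow_le_pow_left₀ (by positivity) hineq2
    _ = ‖B y‖ ^ 2 * ‖B w‖ ^ 2 := by ring
    _ = a * c := by rw [hBy, hBw]
  have hry : rayleigh A y = a / ‖y‖ ^ 2 := rfl
  have hrw : rayleigh A w = c / ‖w‖ ^ 2 := rfl
  have step1 : a / ‖y‖ ^ 2 ≤ ‖w‖ ^ 2 / a := by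
    rw [div_le_div_iff₀ hp ha]
    calc a * a ≤ (‖y‖ * ‖w‖) * (‖y‖ * ‖w‖) :=
          mul_le_mul hineq1 hineq1 ha.le (by positivity)
    _ = ‖w‖ ^ 2 * ‖y‖ ^ 2 := by ring
  have step2 : ‖w‖ ^ 2 / a ≤ c / ‖w‖ ^ 2 := by
    rw [div_le_div_iff₀ ha hbpos]
    calc ‖w‖ ^ 2 * ‖w‖ ^ 2 = (‖w‖ ^ 2) ^ 2 := by ring
    _ ≤ a * c := hsq
    _ = c * a := by ring
  refine ⟨by rw [hry, hrw]; exact step1.trans step2, ?_, ?_⟩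
  · intro heq
    rw [hry, hrw] at heq
    have h1 : a / ‖y‖ ^ 2 = ‖w‖ ^ 2 / a := le_antisymm step1 (heq ▸ step2)
    have h2 : a * a = ‖w‖ ^ 2 * ‖y‖ ^ 2 := by
      rw [div_eq_div_iff hp.ne' ha.ne'] at h1; linarith
    have hsq' : a ^ 2 = (‖y‖ * ‖w‖) ^ 2 := by linear_combination h2
    have h3 : a = ‖y‖ * ‖w‖ := by
      calc a = Real.sqrt (a ^ 2) := (Real.sqrt_sq ha.le).symm
      _ = Real.sqrt ((‖y‖ * ‖w‖) ^ 2) := by rw [hsq']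
      _ = ‖y‖ * ‖w‖ := Real.sqrt_sq (by positivity)
    have h4 : ‖(inner ℂ y w : ℂ)‖ = ‖y‖ * ‖w‖ := by
      rw [hiw, Complex.norm_real, Real.norm_eq_abs, abs_of_pos ha, h3]
    obtain ⟨r, _, hr⟩ := (norm_inner_eq_norm_iff hy hwne).1 h4
    exact ⟨r, hr⟩
  · rintro ⟨μ, hμ⟩
    have hμ0 : μ ≠ 0 := by
      rintro rfl
      rw [zero_smul] at hμ
      exact hwne hμ
    rw [hμ, rayleigh_smul A μ hμ0]
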